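/- Let A be a positive semi-definite real symmetric n×n matrix. Then ρ_per(A) + η_per(A) = n. -/

import Mathlib

/-- The permanent of a (possibly rectangular) matrix whose rows and columns are indexed by
finite types: the sum over all bijections `e : ι ≃ κ` of `∏ i, M i (e i)`.
For a square matrix this is the usual permanent `∑_{σ ∈ S_n} ∏_{i} M i (σ i)`. -/
noncomputable def Matrix.per {ι κ R : Type*} [Fintype ι] [Fintype κ] [DecidableEq ι]
    [DecidableEq κ] [CommSemiring R] (M : Matrix ι κ R) : R :=
  ∑ e : ι ≃ κ, ∏ i, M i (e i)

/-- The permanental rank `ρ_per(A)` of an `n × n` matrix: the largest `k` such that some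
`k × k` submatrix (rows chosen by an injection `f`, columns by an injection `g`) has
nonzero permanent. -/
noncomputable def permRank {n : ℕ} {R : Type*} [CommSemiring R]
    (A : Matrix (Fin n) (Fin n) R) : ℕ :=
  sSup {k | ∃ f g : Fin k → Fin n, Function.Injective f ∧ Function.Injective g ∧
    (A.submatrix f g).per ≠ 0}

/-- The permanental polynomial `π(A, x) = per(A - x I)`. -/
noncomputable def permPoly {n : ℕ} {R : Type*} [CommRing R]
    (A : Matrix (Fin n) (Fin n) R) : Polynomial R :=
  (A.map Polynomial.C - (Polynomial.X : Polynomial R) • (1 : Matrix (Fin n) (Fin n) (Polynomial R))).per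

/-- The permanental nullity `η_per(A)`: the multiplicity of `0` as a root of the
permanental polynomial. -/
noncomputable def permNullity {n : ℕ} {R : Type*} [CommRing R]
    (A : Matrix (Fin n) (Fin n) R) : ℕ :=
  (permPoly A).rootMultiplicity 0

open Finset Polynomial

section Aux

lemma per_reindex {R : Type*} {ι κ ι' κ' : Type*} [Fintype ι] [Fintype κ] [Fintype ι'] [Fintype κ']
    [DecidableEq ι] [DecidableEq κ] [DecidableEq ι'] [DecidableEq κ'] [CommSemiring R]
    (M : Matrix ι κ R) (e₁ : ι' ≃ ι) (e₂ : κ' ≃ κ) :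
    (M.submatrix e₁ e₂).per = M.per := by
  unfold Matrix.per
  refine Fintype.sum_equiv (e₁.equivCongr e₂) _ _ fun e => ?_
  refine Fintype.prod_equiv e₁ (fun i' => (M.submatrix e₁ e₂) i' (e i'))
    (fun i => M i ((e₁.equivCongr e₂ e) i)) fun i => ?_
  simp [Equiv.equivCongr]

lemma per_isEmpty {R : Type*} {ι κ : Type*} [Fintype ι] [Fintype κ] [DecidableEq ι] [DecidableEq κ]
    [IsEmpty ι] [IsEmpty κ] [CommSemiring R] (M : Matrix ι κ R) : M.per = 1 := by
  haveI : Unique (ι ≃ κ) := ⟨⟨Equiv.equivOfIsEmpty ι κ⟩, fun e => by ext i; exact isEmptyElim i⟩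
  rw [Matrix.per, Fintype.sum_unique]
  exact Finset.prod_of_isEmpty _

lemma per_gram {k m : ℕ} (u v : Fin k → Fin m → ℝ) :
    (k.factorial : ℝ) * (Matrix.of fun i j => ∑ a, u i a * v j a).per
      = ∑ f : Fin k → Fin m,
        (∑ σ : Equiv.Perm (Fin k), ∏ i, u (σ i) (f i)) *
        (∑ σ : Equiv.Perm (Fin k), ∏ i, v (σ i) (f i)) := by
  symm
  have h1 : ∀ σ τ : Equiv.Perm (Fin k),
      (∑ f : Fin k → Fin m, (∏ i, u (σ i) (f i)) * ∏ i, v (τ i) (f i))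
        = ∏ i, ∑ a, u (σ i) a * v (τ i) a := by
    intro σ τ
    rw [Finset.prod_univ_sum (fun _ => (univ : Finset (Fin m)))
      (fun i a => u (σ i) a * v (τ i) a), Fintype.piFinset_univ]
    exact Finset.sum_congr rfl fun f _ => (Finset.prod_mul_distrib).symm
  calc (∑ f : Fin k → Fin m,
        (∑ σ : Equiv.Perm (Fin k), ∏ i, u (σ i) (f i)) *
        (∑ σ : Equiv.Perm (Fin k), ∏ i, v (σ i) (f i)))
      = ∑ σ : Equiv.Perm (Fin k), ∑ τ : Equiv.Perm (Fin k),
          ∏ i, ∑ a, u (σ i) a * v (τ i) a := by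
        simp_rw [Finset.sum_mul_sum]
        rw [Finset.sum_comm]
        refine Finset.sum_congr rfl fun σ _ => ?_
        rw [Finset.sum_comm]
        exact Finset.sum_congr rfl fun τ _ => h1 σ τ
    _ = ∑ σ : Equiv.Perm (Fin k), (Matrix.of fun i j => ∑ a, u i a * v j a).per := by
        refine Finset.sum_congr rfl fun σ _ => ?_
        rw [Matrix.per]
        refine Fintype.sum_bijective (Equiv.mulRight σ⁻¹)
          (Equiv.mulRight σ⁻¹).bijective _ _ fun τ => ?_
        refine Fintype.prod_equiv σ _ _ fun i => ?_
        simp only [Equiv.coe_mulRight, Equiv.Perm.mul_apply, Equiv.Perm.inv_def, Equiv.symm_apply_apply]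
        rfl
    _ = (k.factorial : ℝ) * (Matrix.of fun i j => ∑ a, u i a * v j a).per := by
        rw [Finset.sum_const, card_univ, Fintype.card_perm, Fintype.card_fin, nsmul_eq_mul]

lemma per_psd_key {n k : ℕ} {A : Matrix (Fin n) (Fin n) ℝ} (hpsd : A.PosSemidef)
    (f g : Fin k → Fin n) :
    0 ≤ (A.submatrix f f).per ∧
    ((A.submatrix f g).per)^2 ≤ (A.submatrix f f).per * (A.submatrix g g).per := by
  obtain ⟨B, hB⟩ : ∃ B : Matrix (Fin n) (Fin n) ℝ, A = B.conjTranspose * B := by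
    open scoped MatrixOrder in exact CStarAlgebra.nonneg_iff_eq_star_mul_self.mp hpsd.nonneg
  have hA : ∀ i j, A i j = ∑ a, B a i * B a j := by
    intro i j
    rw [hB, Matrix.mul_apply]
    simp [Matrix.conjTranspose_apply]
  have hsub : ∀ p q : Fin k → Fin n, A.submatrix p q =
      Matrix.of fun i j => ∑ a, (fun i' => B i' (p i)) a * (fun i' => B i' (q j)) a := by
    intro p q; ext i j; simp [Matrix.submatrix_apply, hA]
  set Φ : (Fin k → Fin n) → (Fin k → Fin n) → ℝ :=
    fun p h => ∑ σ : Equiv.Perm (Fin k), ∏ i, B (h i) (p (σ i)) with hΦ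
  have key : ∀ p q : Fin k → Fin n,
      (k.factorial : ℝ) * (A.submatrix p q).per = ∑ h : Fin k → Fin n, Φ p h * Φ q h := by
    intro p q
    rw [hsub p q, per_gram]
  have hfac : (0:ℝ) < k.factorial := by positivity
  have h1 : 0 ≤ (A.submatrix f f).per := by
    have := key f f
    have h2 : 0 ≤ ∑ h : Fin k → Fin n, Φ f h * Φ f h :=
      Finset.sum_nonneg fun h _ => mul_self_nonneg _
    nlinarith
  have h1g : 0 ≤ (A.submatrix g g).per := by
    have := key g g
    have h2 : 0 ≤ ∑ h : Fin k → Fin n, Φ g h * Φ g h :=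
      Finset.sum_nonneg fun h _ => mul_self_nonneg _
    nlinarith
  refine ⟨h1, ?_⟩
  have cs := Finset.sum_mul_sq_le_sq_mul_sq univ (fun h => Φ f h) (fun h => Φ g h)
  have e1 := key f g
  have e2 := key f f
  have e3 := key g g
  have hmain : ((k.factorial : ℝ) * (A.submatrix f g).per)^2
      ≤ ((k.factorial : ℝ) * (A.submatrix f f).per) * ((k.factorial : ℝ) * (A.submatrix g g).per) := by
    rw [e1, e2, e3]
    calc (∑ h : Fin k → Fin n, Φ f h * Φ g h)^2
        ≤ (∑ h : Fin k → Fin n, (Φ f h)^2) * (∑ h : Fin k → Fin n, (Φ g h)^2) := cs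
      _ = (∑ h : Fin k → Fin n, Φ f h * Φ f h) * (∑ h : Fin k → Fin n, Φ g h * Φ g h) := by
          simp [pow_two]
  have h4 : (k.factorial:ℝ)^2 * ((A.submatrix f g).per)^2
      ≤ (k.factorial:ℝ)^2 * ((A.submatrix f f).per * (A.submatrix g g).per) := by
    nlinarith [hmain]
  exact le_of_mul_le_mul_left h4 (by positivity)

lemma sum_fixing {n : ℕ} {R : Type*} [CommSemiring R] (M : Matrix (Fin n) (Fin n) R)
    (t : Finset (Fin n)) :
    ∑ e ∈ univ.filter (fun e : Equiv.Perm (Fin n) => ∀ i ∉ t, e i = i), ∏ i ∈ t, M i (e i)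
      = (M.submatrix (Subtype.val : {x // x ∈ t} → Fin n)
          (Subtype.val : {x // x ∈ t} → Fin n)).per := by
  classical
  rw [Matrix.per]
  have h0 : ∑ e ∈ univ.filter (fun e : Equiv.Perm (Fin n) => ∀ i ∉ t, e i = i),
        ∏ i ∈ t, M i (e i)
      = ∑ e : {e : Equiv.Perm (Fin n) // ∀ i ∉ t, e i = i}, ∏ i ∈ t, M i (e.1 i) :=
    Finset.sum_subtype _ (by simp) _
  rw [h0]
  refine (Fintype.sum_equiv (Equiv.Perm.subtypeEquivSubtypePerm (fun i => i ∈ t)) _ _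
    fun π => ?_).symm
  calc ∏ i : {x // x ∈ t}, M.submatrix Subtype.val Subtype.val i (π i)
      = ∏ i ∈ t.attach, M ↑i ↑(π i) :=
        Finset.prod_coe_sort_eq_attach (f := fun i : {x // x ∈ t} => M ↑i ↑(π i))
    _ = ∏ i ∈ t.attach, M ↑i (Equiv.Perm.ofSubtype π ↑i) := by
        refine Finset.prod_congr rfl fun i _ => ?_
        rw [Equiv.Perm.ofSubtype_apply_of_mem π i.2]
    _ = ∏ i ∈ t, M i (Equiv.Perm.ofSubtype π i) :=
        Finset.prod_attach t (fun i => M i (Equiv.Perm.ofSubtype π i))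
    _ = ∏ i ∈ t, M i
          (((Equiv.Perm.subtypeEquivSubtypePerm (fun i => i ∈ t)) π : Equiv.Perm (Fin n)) i) :=
        rfl

lemma per_map {ι κ R S : Type*} [Fintype ι] [Fintype κ] [DecidableEq ι] [DecidableEq κ]
    [CommSemiring R] [CommSemiring S] (f : R →+* S) (M : Matrix ι κ R) :
    (M.map f).per = f M.per := by
  simp [Matrix.per, map_sum, map_prod, Matrix.map_apply]

lemma permPoly_expand {n : ℕ} (A : Matrix (Fin n) (Fin n) ℝ) :
    permPoly A = ∑ t : Finset (Fin n),
      Polynomial.C ((A.submatrix (Subtype.val : {x // x ∈ t} → Fin n)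
        (Subtype.val : {x // x ∈ t} → Fin n)).per) * (-Polynomial.X) ^ (n - t.card) := by
  classical
  unfold permPoly
  rw [Matrix.per]
  have entry : ∀ (e : Fin n ≃ Fin n) (i : Fin n),
      (A.map C - (X : ℝ[X]) • (1 : Matrix (Fin n) (Fin n) ℝ[X])) i (e i)
        = C (A i (e i)) + (if e i = i then -X else 0) := by
    intro e i
    by_cases h : e i = i
    · simp [Matrix.sub_apply, Matrix.map_apply, Matrix.smul_apply, Matrix.one_apply, h,
        sub_eq_add_neg, smul_eq_mul]
    · simp [Matrix.sub_apply, Matrix.map_apply, Matrix.smul_apply, Matrix.one_apply, h,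
        sub_eq_add_neg, smul_eq_mul, show ¬ i = e i from fun h' => h h'.symm]
  calc ∑ e : Fin n ≃ Fin n, ∏ i, (A.map C - (X : ℝ[X]) • 1) i (e i)
      = ∑ e : Fin n ≃ Fin n, ∑ t ∈ (univ : Finset (Fin n)).powerset,
          (∏ i ∈ t, C (A i (e i))) * ∏ i ∈ univ \ t, (if e i = i then -X else 0) := by
        refine Finset.sum_congr rfl fun e _ => ?_
        simp_rw [entry e]
        exact Finset.prod_add _ _ _
    _ = ∑ t ∈ (univ : Finset (Fin n)).powerset, ∑ e : Fin n ≃ Fin n,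
          (∏ i ∈ t, C (A i (e i))) * ∏ i ∈ univ \ t, (if e i = i then -X else 0) :=
        Finset.sum_comm
    _ = ∑ t : Finset (Fin n),
          Polynomial.C ((A.submatrix (Subtype.val : {x // x ∈ t} → Fin n)
            (Subtype.val : {x // x ∈ t} → Fin n)).per) * (-Polynomial.X) ^ (n - t.card) := by
        rw [Finset.powerset_univ]
        refine Finset.sum_congr rfl fun t _ => ?_
        have hprod : ∀ e : Fin n ≃ Fin n,
            (∏ i ∈ univ \ t, if e i = i then -X else (0:ℝ[X]))
              = if (∀ i ∉ t, e i = i) then (-X : ℝ[X])^(n - t.card) else 0 := by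
          intro e
          by_cases h : ∀ i ∉ t, e i = i
          · rw [if_pos h,
              Finset.prod_congr rfl (fun i hi => if_pos (h i (by simpa using hi))),
              Finset.prod_const, Finset.card_sdiff_of_subset (Finset.subset_univ t), card_univ,
              Fintype.card_fin]
          · rw [if_neg h]
            push_neg at h
            obtain ⟨i, hi, hne⟩ := h
            exact Finset.prod_eq_zero (by simp [hi]) (if_neg hne)
        simp_rw [hprod]
        have hC : Polynomial.C ((A.submatrix (Subtype.val : {x // x ∈ t} → Fin n)
              (Subtype.val : {x // x ∈ t} → Fin n)).per)
            = ((A.map Polynomial.C).submatrix (Subtype.val : {x // x ∈ t} → Fin n)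
              (Subtype.val : {x // x ∈ t} → Fin n)).per := by
          rw [show (A.map Polynomial.C).submatrix (Subtype.val : {x // x ∈ t} → Fin n)
              (Subtype.val : {x // x ∈ t} → Fin n)
            = (A.submatrix (Subtype.val : {x // x ∈ t} → Fin n)
              (Subtype.val : {x // x ∈ t} → Fin n)).map Polynomial.C from rfl,
            per_map]
        rw [hC, ← sum_fixing (A.map Polynomial.C) t]
        rw [Finset.sum_filter, Finset.sum_mul]
        refine Finset.sum_congr rfl fun e _ => ?_
        by_cases h : ∀ i ∉ t, e i = i
        · rw [if_pos h, if_pos h]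
          simp [Matrix.map_apply]
        · rw [if_neg h, if_neg h, mul_zero, zero_mul]

lemma pm_eq_sub {n k : ℕ} (A : Matrix (Fin n) (Fin n) ℝ) (t : Finset (Fin n))
    (e : Fin k ≃ {x // x ∈ t}) :
    (A.submatrix (Subtype.val : {x // x ∈ t} → Fin n)
        (Subtype.val : {x // x ∈ t} → Fin n)).per
      = (A.submatrix (fun i => ((e i : {x // x ∈ t}) : Fin n))
          (fun i => ((e i : {x // x ∈ t}) : Fin n))).per := by
  rw [← per_reindex (A.submatrix (Subtype.val : {x // x ∈ t} → Fin n)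
      (Subtype.val : {x // x ∈ t} → Fin n)) e e, Matrix.submatrix_submatrix]
  rfl

end Aux

/-- For a positive semi-definite real symmetric `n × n` matrix `A`,
`ρ_per(A) + η_per(A) = n`. -/
theorem perm_rank_add_nullity_of_posSemidef {n : ℕ} (A : Matrix (Fin n) (Fin n) ℝ)
    (hsym : A.IsSymm) (hpsd : A.PosSemidef) :
    permRank A + permNullity A = n := by
  classical
  set pm : Finset (Fin n) → ℝ := fun t =>
    (A.submatrix (Subtype.val : {x // x ∈ t} → Fin n)
      (Subtype.val : {x // x ∈ t} → Fin n)).per with hpm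
  set c : ℕ → ℝ := fun k => ∑ t ∈ Finset.powersetCard k (univ : Finset (Fin n)), pm t with hc
  -- nonnegativity of principal permanents
  have pm_nonneg : ∀ t : Finset (Fin n), 0 ≤ pm t := by
    intro t
    have h := pm_eq_sub A t (t.orderIsoOfFin rfl).toEquiv
    calc (0:ℝ) ≤ (A.submatrix
          (fun i => (((t.orderIsoOfFin rfl).toEquiv i : {x // x ∈ t}) : Fin n))
          (fun i => (((t.orderIsoOfFin rfl).toEquiv i : {x // x ∈ t}) : Fin n))).per :=
        (per_psd_key hpsd
          (fun i => (((t.orderIsoOfFin rfl).toEquiv i : {x // x ∈ t}) : Fin n))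
          (fun i => (((t.orderIsoOfFin rfl).toEquiv i : {x // x ∈ t}) : Fin n))).1
      _ = pm t := h.symm
  have c_nonneg : ∀ k, 0 ≤ c k := fun k => Finset.sum_nonneg fun t _ => pm_nonneg t
  -- c 0 = 1
  have c_zero : c 0 = 1 := by
    rw [hc]
    simp only [Finset.powersetCard_zero, Finset.sum_singleton]
    haveI : IsEmpty {x : Fin n // x ∈ (∅ : Finset (Fin n))} := by
      refine ⟨fun x => ?_⟩; exact absurd x.2 (Finset.notMem_empty _)
    exact per_isEmpty _
  -- the two descriptions of the rank set agree
  have set_eq : {k | ∃ f g : Fin k → Fin n, Function.Injective f ∧ Function.Injective g ∧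
      (A.submatrix f g).per ≠ 0} = {k | c k ≠ 0} := by
    ext k
    simp only [Set.mem_setOf_eq]
    constructor
    · rintro ⟨f, g, hf, hg, hfg⟩
      -- per (A.submatrix f f) > 0
      have hsq : 0 < ((A.submatrix f g).per)^2 := by positivity
      have hineq := (per_psd_key hpsd f g).2
      have hff : 0 < (A.submatrix f f).per := by
        rcases lt_or_eq_of_le (per_psd_key hpsd f g).1 with h | h
        · exact h
        · exfalso; rw [← h, zero_mul] at hineq; nlinarith
      set t : Finset (Fin n) := Finset.image f univ with ht
      have htcard : t.card = k := by
        rw [ht, Finset.card_image_of_injective _ hf, card_univ, Fintype.card_fin]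
      have hmemt : ∀ i, f i ∈ t := fun i => Finset.mem_image_of_mem f (Finset.mem_univ i)
      have hsurj : ∀ x : {x // x ∈ t}, ∃ i, f i = (x : Fin n) := by
        rintro ⟨x, hx⟩
        rw [ht] at hx
        obtain ⟨i, _, hi⟩ := Finset.mem_image.mp hx
        exact ⟨i, hi⟩
      set e : Fin k ≃ {x // x ∈ t} := Equiv.ofBijective (fun i => ⟨f i, hmemt i⟩)
        ⟨fun i j hij => hf (by simpa using hij), fun x => by
          obtain ⟨i, hi⟩ := hsurj x
          exact ⟨i, Subtype.ext hi⟩⟩ with he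
      have hpmt : pm t = (A.submatrix f f).per := (pm_eq_sub A t e).trans rfl
      have hle : pm t ≤ c k := by
        refine Finset.single_le_sum (fun s _ => pm_nonneg s) ?_
        simp [Finset.mem_powersetCard, htcard]
      have : 0 < c k := lt_of_lt_of_le (by rw [hpmt]; exact hff) hle
      exact ne_of_gt this
    · intro hck
      obtain ⟨t, hmem, hpmne⟩ : ∃ t ∈ Finset.powersetCard k (univ : Finset (Fin n)), pm t ≠ 0 := by
        by_contra h
        push_neg at h
        exact hck (Finset.sum_eq_zero h)
      have htcard : t.card = k := (Finset.mem_powersetCard.mp hmem).2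
      set e : Fin k ≃ {x // x ∈ t} := (t.orderIsoOfFin htcard).toEquiv with he
      refine ⟨fun i => ((e i : {x // x ∈ t}) : Fin n), fun i => ((e i : {x // x ∈ t}) : Fin n),
        ?_, ?_, ?_⟩
      · exact Subtype.val_injective.comp e.injective
      · exact Subtype.val_injective.comp e.injective
      · have h := pm_eq_sub A t e
        exact fun hh => hpmne (h.trans hh)
  -- basic facts about the set S = {k | c k ≠ 0}
  have h0S : 0 ∈ {k | c k ≠ 0} := by simp [Set.mem_setOf_eq, c_zero]
  have hbdd : ∀ k ∈ {k | c k ≠ 0}, k ≤ n := by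
    intro k hk
    by_contra h
    push_neg at h
    apply hk
    rw [hc]
    have : Finset.powersetCard k (univ : Finset (Fin n)) = ∅ :=
      Finset.powersetCard_eq_empty.mpr (by rwa [card_univ, Fintype.card_fin])
    simp [this]
  have hBdd : BddAbove {k | c k ≠ 0} := ⟨n, fun k hk => hbdd k hk⟩
  set K : ℕ := sSup {k | c k ≠ 0} with hK
  have hKmem : K ∈ {k | c k ≠ 0} := Nat.sSup_mem ⟨0, h0S⟩ hBdd
  have hKn : K ≤ n := hbdd K hKmem
  have hcK : c K ≠ 0 := hKmem
  have hgt : ∀ k, K < k → c k = 0 := by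
    intro k hKk
    by_contra h
    exact absurd (le_csSup hBdd h) (not_le.mpr hKk)
  -- permRank A = K
  have hrank : permRank A = K := by
    rw [permRank, set_eq]
  -- coefficients of permPoly
  have hcoeff : ∀ j, j ≤ n → (permPoly A).coeff j = (-1 : ℝ)^j * c (n - j) := by
    intro j hj
    rw [permPoly_expand A, Polynomial.finset_sum_coeff]
    have hterm : ∀ t : Finset (Fin n),
        (Polynomial.C (pm t) * (-Polynomial.X : ℝ[X]) ^ (n - t.card)).coeff j
          = if t.card = n - j then (-1:ℝ)^j * pm t else 0 := by
      intro t
      have hrw : Polynomial.C (pm t) * (-X : ℝ[X])^(n - t.card)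
          = Polynomial.C ((-1:ℝ)^(n - t.card) * pm t) * X^(n - t.card) := by
        rw [neg_pow, Polynomial.C_mul, Polynomial.C_pow, Polynomial.C_neg, Polynomial.C_1]
        ring
      rw [hrw, Polynomial.coeff_C_mul, Polynomial.coeff_X_pow]
      have hcard : t.card ≤ n := by
        simpa [card_univ] using Finset.card_le_card (Finset.subset_univ t)
      by_cases h : t.card = n - j
      · have h2 : n - t.card = j := by omega
        rw [if_pos h, if_pos h2.symm, h2, mul_one]
      · have h2 : n - t.card ≠ j := by omega
        rw [if_neg h, if_neg (fun hh => h2 hh.symm), mul_zero]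
    rw [Finset.sum_congr rfl fun t _ => hterm t]
    rw [hc, Finset.mul_sum, Finset.powersetCard_eq_filter, Finset.powerset_univ,
      Finset.sum_filter]
  -- permPoly is nonzero
  have hne : permPoly A ≠ 0 := fun h => by
    have h1 := hcoeff n le_rfl
    rw [h, Polynomial.coeff_zero, Nat.sub_self, c_zero, mul_one] at h1
    exact pow_ne_zero n (by norm_num : (-1:ℝ) ≠ 0) h1.symm
  have hnull : permNullity A = n - K := by
    rw [permNullity, Polynomial.rootMultiplicity_eq_natTrailingDegree']
    refine le_antisymm ?_ ?_
    · apply Polynomial.natTrailingDegree_le_of_ne_zero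
      rw [hcoeff (n - K) (by omega)]
      have h2 : n - (n - K) = K := by omega
      rw [h2]
      exact mul_ne_zero (pow_ne_zero _ (by norm_num)) hcK
    · apply Polynomial.le_natTrailingDegree hne
      intro m hm
      rw [hcoeff m (by omega)]
      rw [hgt (n - m) (by omega), mul_zero]
  rw [hrank, hnull]
  omega
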